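/- arXiv:2601.20322 — 5 statements merged into one kernel-verified Lean document; each statement's English description precedes it below -/
import Mathlib

section
/- Let C be a category and β : C ⥤ Arrow C a functor such that β ⋙ Arrow.leftFunc = 𝟭 C (the domain of β.obj a is a, and the domain component of β.map f is f). Write u := β ⋙ Arrow.rightFunc : C ⥤ C and, for each object a, β_a := (β.obj a).hom : a ⟶ u.obj a. Assume the comultiplication condition β ⋙ Functor.mapArrow β = β ⋙ δ, where δ : Arrow C ⥤ Arrow (Arrow C) is the functor sending an object f : x ⟶ y of Arrow C to the object of Arrow (Arrow C) given by the square (f, 𝟙 y) : Arrow.mk f ⟶ Arrow.mk (𝟙 y), and sending a morphism (h₀, h₁) : f ⟶ g to the corresponding morphism of squares with components ((h₀, h₁), (h₁, h₁)). Then: (1) for every object a, (β.obj (u.obj a)).hom = 𝟙 (u.obj a) and u.map β_a = 𝟙 (u.obj a); (2) u.obj (u.obj a) = u.obj a for every object a; and (3) u.map (u.map f) = u.map f for every morphism f of C. In other words, u is an idempotent functor and (u, 𝟙 : u ⋙ u = u, β) is an (idempotent) monad on C. -/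
open CategoryTheory

universe v u

variable {C : Type u} [Category.{v} C]

/-- The comultiplication `δ : Arrow C ⥤ Arrow (Arrow C)` of the arrow comonad: it sends an
object `f : x ⟶ y` of `Arrow C` to the square `(f, 𝟙 y) : Arrow.mk f ⟶ Arrow.mk (𝟙 y)`,
regarded as an object of `Arrow (Arrow C)`, and a morphism `(h₀, h₁) : f ⟶ g` to the morphism
of squares with components `((h₀, h₁), (h₁, h₁))`. -/
def deltaFunctor (C : Type u) [Category.{v} C] : Arrow C ⥤ Arrow (Arrow C) where
  obj f := Arrow.mk
    (Arrow.homMk (f := f) (g := Arrow.mk (𝟙 f.right)) (u := f.hom) (v := 𝟙 f.right) (by simp))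
  map {f g} S := Arrow.homMk
    (u := S) (v := Arrow.homMk (u := S.right) (v := S.right) (by simp))
    (by ext <;> simp)
  map_id f := by ext <;> simp
  map_comp S T := by ext <;> simp

/-- If `β : C ⥤ Arrow C` is a coalgebra structure for the arrow comonad (i.e. satisfies the
counit condition `β ⋙ Arrow.leftFunc = 𝟭 C` and the comultiplication condition
`β ⋙ 𝔸(β) = β ⋙ δ`), then, writing `u := β ⋙ Arrow.rightFunc`:
(1) `β` at `u.obj a` is the identity arrow of `u.obj a`, and `u.map` of the structure morphism
`(β.obj a).hom` is the identity of `u.obj a`;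
(2) `u` is idempotent on objects; and
(3) `u` is idempotent on morphisms.
(Equalities of morphisms with possibly different, but provably equal, end points are
expressed as equalities of the corresponding objects `Arrow.mk _` of the arrow category.)
In other words, `u` is an idempotent functor and `(u, 𝟙, β)` is a monad on `C`. -/
theorem stmt1 (β : C ⥤ Arrow C)
    (hcounit : β ⋙ Arrow.leftFunc = 𝟭 C)
    (hcomult : β ⋙ Functor.mapArrow β = β ⋙ deltaFunctor C) :
    (∀ a : C,
      β.obj ((β ⋙ Arrow.rightFunc).obj a) =
          Arrow.mk (𝟙 ((β ⋙ Arrow.rightFunc).obj a)) ∧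
      Arrow.mk ((β ⋙ Arrow.rightFunc).map (β.obj a).hom) =
          Arrow.mk (𝟙 ((β ⋙ Arrow.rightFunc).obj a))) ∧
    (∀ a : C,
      (β ⋙ Arrow.rightFunc).obj ((β ⋙ Arrow.rightFunc).obj a) =
        (β ⋙ Arrow.rightFunc).obj a) ∧
    (∀ {a b : C} (f : a ⟶ b),
      Arrow.mk ((β ⋙ Arrow.rightFunc).map ((β ⋙ Arrow.rightFunc).map f)) =
        Arrow.mk ((β ⋙ Arrow.rightFunc).map f)) := by
  have aux : ∀ {a b a' b' : C} (h1 : a' = a) (h2 : b = b') (g : a ⟶ b),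
      Arrow.mk (eqToHom h1 ≫ g ≫ eqToHom h2) = Arrow.mk g := by
    intro a b a' b' h1 h2 g; subst h1; subst h2; simp
  have hobj : ∀ a : C, (Functor.mapArrow β).obj (β.obj a) = (deltaFunctor C).obj (β.obj a) :=
    fun a => Functor.congr_obj hcomult a
  have h1a : ∀ a : C, β.obj ((β ⋙ Arrow.rightFunc).obj a) =
      Arrow.mk (𝟙 ((β ⋙ Arrow.rightFunc).obj a)) := by
    intro a
    have := congrArg (fun X : Arrow (Arrow C) => X.right) (hobj a)
    simp [deltaFunctor, Functor.mapArrow] at this; exact this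
  have h1b : ∀ a : C, Arrow.mk ((β ⋙ Arrow.rightFunc).map (β.obj a).hom) =
      Arrow.mk (𝟙 ((β ⋙ Arrow.rightFunc).obj a)) := by
    intro a
    have := congrArg (fun X : Arrow (Arrow C) => Arrow.mk X.hom.right) (hobj a)
    simp [deltaFunctor, Functor.mapArrow] at this; exact this
  refine ⟨fun a => ⟨h1a a, h1b a⟩, fun a => ?_, fun {a b} f => ?_⟩
  · have := congrArg Comma.right (h1a a)
    simp at this; exact this
  · have h := Functor.congr_hom hcomult f
    have h2 := congrArg (fun s => Arrow.mk s.right.right) h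
    simp [deltaFunctor] at h2
    show Arrow.mk (β.map (β.map f).right).right = Arrow.mk (β.map f).right
    have e2 : ∀ {X Y : Arrow (Arrow C)} (h : X = Y),
        (eqToHom h).right.right =
          eqToHom (congrArg (fun Z : Arrow (Arrow C) => Z.right.right) h) := by
      intro X Y h; subst h; simp
    have e3 : ∀ {X Y X' Y' : Arrow (Arrow C)} (h : X = Y) (h' : X' = Y') (g : Y ⟶ X'),
        Arrow.mk (eqToHom h ≫ g ≫ eqToHom h').right.right = Arrow.mk g.right.right := by
      intro X Y X' Y' h h' g; subst h; subst h'; simp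
    exact (congrArg (fun s => Arrow.mk s.right.right) h).trans ((e3 _ _ _).trans rfl)
end

section
/- Let C be a pointed category (zero object and induced zero morphisms). The following are equivalent: (i) every morphism of C has a kernel; (ii) there exist a functor K : Arrow C ⥤ C and a natural transformation κ : K ⟶ Arrow.leftFunc such that (a) for every object f of Arrow C, f.hom ∘ κ.app f = 0; (b) for every object a of C, the component κ.app (Arrow.mk (0 : a ⟶ 0)) : K.obj (Arrow.mk (0 : a ⟶ 0)) ⟶ a is an isomorphism; and (c) for every object f of Arrow C, K.map of the morphism of arrows (κ.app f, 0) : Arrow.mk (0 : K.obj f ⟶ 0) ⟶ f equals the component κ.app (Arrow.mk (0 : K.obj f ⟶ 0)) : K.obj (Arrow.mk (0 : K.obj f ⟶ 0)) ⟶ K.obj f. -/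
open CategoryTheory CategoryTheory.Limits ZeroObject

universe v u

/-- For a pointed category `C` (zero object and induced zero morphisms), the following are
equivalent: (i) every morphism of `C` has a kernel; (ii) there are a functor
`K : Arrow C ⥤ C` and a natural transformation `κ : K ⟶ Arrow.leftFunc` such that
(a) `κ.app f ≫ f.hom = 0` for every object `f` of `Arrow C`;
(b) `κ.app (Arrow.mk (0 : a ⟶ 0))` is an isomorphism for every object `a` of `C`; and
(c) for every `f`, `K.map` of the morphism of arrows
`(κ.app f, 0) : Arrow.mk (0 : K.obj f ⟶ 0) ⟶ f` equals
`κ.app (Arrow.mk (0 : K.obj f ⟶ 0))`. -/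
theorem stmt3 (C : Type u) [Category.{v} C] [HasZeroObject C] [HasZeroMorphisms C] :
    HasKernels C ↔
      ∃ (K : Arrow C ⥤ C) (κ : K ⟶ Arrow.leftFunc)
        (h0 : ∀ f : Arrow C, κ.app f ≫ f.hom = 0),
        (∀ a : C, IsIso (κ.app (Arrow.mk (0 : a ⟶ 0)))) ∧
        (∀ f : Arrow C,
          K.map (Arrow.homMk (f := Arrow.mk (0 : K.obj f ⟶ 0)) (g := f)
              (u := κ.app f) (v := (0 : (0 : C) ⟶ f.right)) (by simp; exact h0 f)) =
            κ.app (Arrow.mk (0 : K.obj f ⟶ 0))) := by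
  constructor
  · intro h
    refine ⟨{ obj := fun f => kernel f.hom,
              map := fun {f g} φ => kernel.map f.hom g.hom φ.left φ.right (by simp),
              map_id := by intro f; apply equalizer.hom_ext; simp
              map_comp := by intro f g h φ ψ; apply equalizer.hom_ext; simp },
            { app := fun f => kernel.ι f.hom,
              naturality := by intro f g φ; exact kernel.lift_ι g.hom _ _ }, fun f => kernel.condition f.hom,
            fun a => by dsimp; exact kernel.ι_zero_isIso, fun f => ?_⟩
    apply equalizer.hom_ext
    simp
  · rintro ⟨K, κ, h0, hiso, hc⟩
    constructor
    intro X Y f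
    have hmono : ∀ f : Arrow C, Mono (κ.app f) := by
      intro f
      constructor
      intro W u v huv
      have := hiso W
      apply (cancel_epi (κ.app (Arrow.mk (0 : W ⟶ (0 : C))))).1
      have hu := κ.naturality (Arrow.homMk (f := Arrow.mk (0 : W ⟶ (0 : C)))
        (g := Arrow.mk (0 : K.obj f ⟶ (0 : C))) (u := u) (v := 𝟙 (0 : C)) (by simp))
      have hv := κ.naturality (Arrow.homMk (f := Arrow.mk (0 : W ⟶ (0 : C)))
        (g := Arrow.mk (0 : K.obj f ⟶ (0 : C))) (u := v) (v := 𝟙 (0 : C)) (by simp))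
      refine hu.symm.trans (Eq.trans ?_ hv)
      rw [← hc f]
      refine (K.map_comp _ _).symm.trans (Eq.trans ?_ (K.map_comp _ _))
      congr 1
      ext
      · exact huv
      · simp
    refine HasLimit.mk ⟨KernelFork.ofι (κ.app (Arrow.mk f)) (h0 (Arrow.mk f)), ?_⟩
    refine KernelFork.IsLimit.ofι (κ.app (Arrow.mk f)) (h0 (Arrow.mk f))
      (fun {W} g hg => @inv _ _ _ _ (κ.app (Arrow.mk (0 : W ⟶ (0 : C)))) (hiso W) ≫
        K.map (Arrow.homMk (f := Arrow.mk (0 : W ⟶ (0 : C))) (g := Arrow.mk f)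
          (u := g) (v := 0) (by simp; exact hg))) (fun {W} g hg => ?_) (fun {W} g hg m hm => ?_)
    · have := κ.naturality (Arrow.homMk (f := Arrow.mk (0 : W ⟶ (0 : C))) (g := Arrow.mk f)
        (u := g) (v := 0) (by simp; exact hg))
      rw [Category.assoc, this]
      exact IsIso.inv_hom_id_assoc (κ.app (Arrow.mk (0 : W ⟶ (0 : C)))) _
    · have hm' : (inv (κ.app (Arrow.mk (0 : W ⟶ (0 : C)))) ≫
          K.map (Arrow.homMk (f := Arrow.mk (0 : W ⟶ (0 : C))) (g := Arrow.mk f)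
            (u := g) (v := 0) (by simp; exact hg))) ≫ κ.app (Arrow.mk f) = g := by
        have := κ.naturality (Arrow.homMk (f := Arrow.mk (0 : W ⟶ (0 : C))) (g := Arrow.mk f)
          (u := g) (v := 0) (by simp; exact hg))
        rw [Category.assoc, this, IsIso.inv_hom_id_assoc]
        rfl
      have := hmono (Arrow.mk f)
      exact (cancel_mono (κ.app (Arrow.mk f))).1 (hm.trans hm'.symm)
end

section
/- Let C be a pointed category, K : Arrow C ⥤ C a functor, and κ : K ⟶ Arrow.leftFunc a natural transformation such that: (a) for every object f of Arrow C, f.hom ∘ κ.app f = 0; (b) for every object a of C, κ.app (Arrow.mk (0 : a ⟶ 0)) is an isomorphism; and (c) for every object f of Arrow C, K.map ((κ.app f, 0) : Arrow.mk (0 : K.obj f ⟶ 0) ⟶ f) = κ.app (Arrow.mk (0 : K.obj f ⟶ 0)). Then for every object f of Arrow C, the morphism κ.app f : K.obj f ⟶ f.left is a kernel of f.hom, i.e. the kernel fork KernelFork.ofι (κ.app f) (using (a)) is a limit cone. -/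
open CategoryTheory CategoryTheory.Limits ZeroObject

universe v u

/-- Let `C` be a pointed category, `K : Arrow C ⥤ C` a functor and
`κ : K ⟶ Arrow.leftFunc` a natural transformation such that
(a) `κ.app f ≫ f.hom = 0` for every object `f` of `Arrow C`;
(b) `κ.app (Arrow.mk (0 : a ⟶ 0))` is an isomorphism for every object `a` of `C`; and
(c) for every `f`, `K.map ((κ.app f, 0) : Arrow.mk (0 : K.obj f ⟶ 0) ⟶ f)` equals
`κ.app (Arrow.mk (0 : K.obj f ⟶ 0))`.
Then for every object `f` of `Arrow C`, the morphism `κ.app f : K.obj f ⟶ f.left` is a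
kernel of `f.hom`, i.e. the kernel fork `KernelFork.ofι (κ.app f) (h0 f)` is a limit cone. -/
theorem stmt4 (C : Type u) [Category.{v} C] [HasZeroObject C] [HasZeroMorphisms C]
    (K : Arrow C ⥤ C) (κ : K ⟶ Arrow.leftFunc)
    (h0 : ∀ f : Arrow C, κ.app f ≫ f.hom = 0)
    (hiso : ∀ a : C, IsIso (κ.app (Arrow.mk (0 : a ⟶ 0))))
    (hc : ∀ f : Arrow C,
      K.map (Arrow.homMk (f := Arrow.mk (0 : K.obj f ⟶ 0)) (g := f)
          (u := κ.app f) (v := (0 : (0 : C) ⟶ f.right)) (by simp; exact h0 f)) =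
        κ.app (Arrow.mk (0 : K.obj f ⟶ 0))) :
    ∀ f : Arrow C, Nonempty (IsLimit (KernelFork.ofι (κ.app f) (h0 f))) := by
  intro f
  constructor
  refine KernelFork.IsLimit.ofι (X := f.left) _ _ (fun {W} g hg =>
    haveI := hiso W
    (inv (κ.app (Arrow.mk (0 : W ⟶ 0))) (I := hiso W) ≫
      K.map (Arrow.homMk (f := Arrow.mk (0 : W ⟶ 0)) (g := f)
        (u := g) (v := (0 : (0 : C) ⟶ f.right)) (by simp; exact hg)) : Arrow.leftFunc.obj (Arrow.mk (0 : W ⟶ 0)) ⟶ K.obj f)) ?_ ?_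
  · intro W g hg
    haveI := hiso W
    have := κ.naturality (Arrow.homMk (f := Arrow.mk (0 : W ⟶ 0)) (g := f)
        (u := g) (v := (0 : (0 : C) ⟶ f.right)) (by simp; exact hg))
    change _ = _ ≫ g at this
    exact (Category.assoc _ _ _).trans ((congrArg (inv (κ.app (Arrow.mk (0 : W ⟶ 0))) ≫ ·) this).trans
      (IsIso.inv_hom_id_assoc _ _))
  · intro W g hg l hl
    haveI := hiso W
    have hfact : (Arrow.homMk (f := Arrow.mk (0 : W ⟶ 0)) (g := f)
        (u := g) (v := (0 : (0 : C) ⟶ f.right)) (by simp; exact hg)) =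
      (Arrow.homMk (f := Arrow.mk (0 : W ⟶ 0)) (g := Arrow.mk (0 : K.obj f ⟶ 0))
        (u := l) (v := 𝟙 (0 : C)) (by simp)) ≫
      (Arrow.homMk (f := Arrow.mk (0 : K.obj f ⟶ 0)) (g := f)
        (u := κ.app f) (v := (0 : (0 : C) ⟶ f.right)) (by simp; exact h0 f)) :=
      Arrow.hom_ext _ _ hl.symm (Category.id_comp _).symm
    have nat := κ.naturality (Arrow.homMk (f := Arrow.mk (0 : W ⟶ 0))
        (g := Arrow.mk (0 : K.obj f ⟶ 0)) (u := l) (v := 𝟙 (0 : C)) (by simp))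
    change _ = _ ≫ l at nat
    exact (IsIso.inv_hom_id_assoc (κ.app (Arrow.mk (0 : W ⟶ 0))) l).symm.trans (congrArg (inv (κ.app (Arrow.mk (0 : W ⟶ 0))) ≫ ·)
      ((congrArg K.map hfact).trans ((K.map_comp _ _).trans
      ((congrArg (K.map _ ≫ ·) (hc f)).trans nat))).symm)
end

section
/- For every category C and every n ≥ 0, let N^w_n(C) be the wide subcategory of the category of chains of n composable morphisms in C (functors Fin (n+1) ⥤ C, i.e. ComposableArrows C n, with natural transformations as morphisms) whose morphisms are those natural transformations (commutative ladders) φ such that the components φ_1, …, φ_n at vertices 1, …, n are identities (only φ_0 may be nontrivial). Let 𝔻(C) := Σ (a : C), Over a denote the décalage of C, the disjoint union of the slice categories C/a with the sigma category structure. Then there is an isomorphism of categories N^w_n(C) ≅ 𝔻ⁿ(C) (the n-fold iterate of 𝔻 applied to C), and these isomorphisms are natural in C. -/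
open CategoryTheory

universe u

/-- Morphisms of the wide subcategory `N^w_n(C)` of `ComposableArrows C n`: ladders `φ` whose
components at the vertices `1, …, n` are identities (only `φ_0` may be nontrivial). -/
def NwHom {n : ℕ} {C : Type u} [Category.{u} C] (X Y : ComposableArrows C n) : Type u :=
  {φ : X ⟶ Y // ∀ i : Fin (n + 1), i ≠ 0 → ∃ h : X.obj i = Y.obj i, φ.app i = eqToHom h}

/-- `N^w_n(C)`: the wide subcategory of `ComposableArrows C n` (chains of `n` composable
morphisms of `C`) whose morphisms are the ladders whose components at `1, …, n` are
identities. -/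
def Nw (n : ℕ) (C : Type u) [Category.{u} C] : Type u := ComposableArrows C n

instance (n : ℕ) (C : Type u) [Category.{u} C] : Category.{u} (Nw n C) where
  Hom X Y := NwHom X Y
  id X := ⟨𝟙 _, fun i _ => ⟨rfl, rfl⟩⟩
  comp φ ψ := ⟨φ.1 ≫ ψ.1, fun i hi => by
    obtain ⟨h1, e1⟩ := φ.2 i hi
    obtain ⟨h2, e2⟩ := ψ.2 i hi
    exact ⟨h1.trans h2, by
      show φ.1.app i ≫ ψ.1.app i = _
      rw [e1, e2, eqToHom_trans]⟩⟩
  id_comp φ := Subtype.ext (by exact Category.id_comp _)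
  comp_id φ := Subtype.ext (by exact Category.comp_id _)
  assoc φ ψ χ := Subtype.ext (by exact Category.assoc _ _ _)

/-- The functor `N^w_n(C) ⥤ N^w_n(D)` induced by a functor `F : C ⥤ D`. -/
def NwMap (n : ℕ) {C D : Type u} [Category.{u} C] [Category.{u} D] (F : C ⥤ D) :
    Nw n C ⥤ Nw n D where
  obj X := X ⋙ F
  map {X Y} φ := ⟨Functor.whiskerRight φ.1 F, fun i hi => by
    obtain ⟨h, e⟩ := φ.2 i hi
    exact ⟨congrArg F.obj h, by
      show F.map (φ.1.app i) = _
      rw [e, eqToHom_map]⟩⟩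
  map_id X := Subtype.ext (by ext i; exact F.map_id _)
  map_comp φ ψ := Subtype.ext (by ext i; exact F.map_comp _ _)

/-- The décalage `𝔻(C) = Σ (a : C), C/a` of a category `C`: the disjoint union of the slice
categories of `C`, with the sigma category structure. -/
def Dec (C : Type u) [Category.{u} C] : Type u := Σ a : C, Over a

instance (C : Type u) [Category.{u} C] : Category.{u} (Dec C) :=
  inferInstanceAs (Category.{u} (Σ a : C, Over a))

/-- The functor `𝔻(C) ⥤ 𝔻(D)` induced by a functor `F : C ⥤ D`. -/
def decMap {C D : Type u} [Category.{u} C] [Category.{u} D] (F : C ⥤ D) : Dec C ⥤ Dec D :=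
  Sigma.desc (fun a =>
    Over.post F ⋙ (Sigma.incl (F.obj a) : Over (F.obj a) ⥤ Σ b : D, Over b))

/-- The `n`-fold iterate `𝔻ⁿ(C)` of the décalage. -/
def decIter : ℕ → Cat.{u, u} → Cat.{u, u}
  | 0, C => C
  | (n + 1), C => Cat.of (Dec (decIter n C))

/-- The action of `𝔻ⁿ` on functors. -/
def decIterMap : (n : ℕ) → {C D : Cat.{u, u}} → (C ⟶ D) → (decIter n C ⟶ decIter n D)
  | 0, _, _, F => F
  | (n + 1), _, _, F => (decMap (decIterMap n F).toFunctor).toCatHom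

section IsoOfBij
variable {A B : Type u} [Category.{u} A] [Category.{u} B] (F : A ⥤ B)
    (hobj : Function.Bijective F.obj)
    (hmap : ∀ (x y : A), Function.Bijective (F.map : (x ⟶ y) → (F.obj x ⟶ F.obj y)))

/-- inverse on objects -/
noncomputable def invObj (b : B) : A := (Equiv.ofBijective _ hobj).symm b

lemma invObj_spec (b : B) : F.obj (invObj F hobj b) = b :=
  (Equiv.ofBijective _ hobj).apply_symm_apply b

lemma invObj_obj (a : A) : invObj F hobj (F.obj a) = a :=
  (Equiv.ofBijective _ hobj).symm_apply_apply a

/-- inverse on homs -/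
noncomputable def invMap {b c : B} (g : b ⟶ c) : invObj F hobj b ⟶ invObj F hobj c :=
  (Equiv.ofBijective _ (hmap _ _)).symm
    (eqToHom (invObj_spec F hobj b) ≫ g ≫ eqToHom (invObj_spec F hobj c).symm)

lemma invMap_spec {b c : B} (g : b ⟶ c) :
    F.map (invMap F hobj hmap g) =
      eqToHom (invObj_spec F hobj b) ≫ g ≫ eqToHom (invObj_spec F hobj c).symm :=
  (Equiv.ofBijective _ (hmap _ _)).apply_symm_apply _

/-- Inverse functor of a functor bijective on objects and homs. -/
noncomputable def invOfBijective : B ⥤ A where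
  obj := invObj F hobj
  map := invMap F hobj hmap
  map_id b := by
    apply (hmap _ _).1
    rw [invMap_spec, F.map_id]
    simp
  map_comp {b c d} g g' := by
    apply (hmap _ _).1
    rw [invMap_spec, F.map_comp, invMap_spec, invMap_spec]
    simp

lemma comp_invOfBijective : F ⋙ invOfBijective F hobj hmap = 𝟭 A := by
  refine CategoryTheory.Functor.ext (fun a => invObj_obj F hobj a) ?_
  intro x y f
  show invMap F hobj hmap (F.map f) = _
  apply (hmap _ _).1
  erw [invMap_spec, F.map_comp, F.map_comp, eqToHom_map, eqToHom_map]
  simp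

lemma invOfBijective_comp : invOfBijective F hobj hmap ⋙ F = 𝟭 B := by
  refine CategoryTheory.Functor.ext (fun b => invObj_spec F hobj b) ?_
  intro x y f
  show F.map (invMap F hobj hmap f) = _
  rw [invMap_spec]
  simp
  rfl

/-- Build an isomorphism in `Cat` from a functor bijective on objects and on homs. -/
noncomputable def isoOfBijective : Cat.of A ≅ Cat.of B where
  hom := F.toCatHom
  inv := (invOfBijective F hobj hmap).toCatHom
  hom_inv_id := congrArg Functor.toCatHom (comp_invOfBijective F hobj hmap)
  inv_hom_id := congrArg Functor.toCatHom (invOfBijective_comp F hobj hmap)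

end IsoOfBij

/-- The evaluation functor `N^w_0(C) ⥤ C`. -/
def nw0Functor (C : Type u) [Category.{u} C] : Nw 0 C ⥤ C where
  obj X := X.obj 0
  map φ := φ.1.app 0
  map_id X := rfl
  map_comp φ ψ := rfl

lemma nw0_obj_bij (C : Type u) [Category.{u} C] :
    Function.Bijective (nw0Functor C).obj := by
  constructor
  · intro X Y h
    exact ComposableArrows.ext₀ h
  · intro a
    exact ⟨ComposableArrows.mk₀ a, rfl⟩

lemma nw0_map_bij (C : Type u) [Category.{u} C] (X Y : Nw 0 C) :
    Function.Bijective ((nw0Functor C).map : (X ⟶ Y) → _) := by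
  constructor
  · intro φ ψ h
    apply Subtype.ext
    exact ComposableArrows.hom_ext₀ h
  · intro f
    exact ⟨⟨ComposableArrows.homMk₀ f, fun i hi => absurd (Fin.ext (Nat.lt_one_iff.mp i.isLt)) hi⟩, rfl⟩

example (C D : Cat.{u,u}) (F : C ⟶ D) :
    (NwMap 0 F.toFunctor ⋙ nw0Functor D) = nw0Functor C ⋙ F.toFunctor := rfl

namespace StepIso

open ComposableArrows

variable {C : Type u} [Category.{u} C] {n : ℕ}

/-- underlying hom in `Nw` categories -/
lemma nw_eqToHom_app {X Y : Nw n C} (h : X = Y) (i : Fin (n + 1)) :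
    (eqToHom h : X ⟶ Y).1.app i =
      eqToHom (congrArg (fun Z : Nw n C => (show ComposableArrows C n from Z).obj i) h) := by
  subst h; rfl

/-- the functor `Over a ⥤ Nw (n+1) C` -/
def psiA (a : ComposableArrows C n) : Over (show Nw n C from a) ⥤ Nw (n + 1) C where
  obj u := a.precomp (u.hom.1.app 0)
  map {u v} g := ⟨ComposableArrows.homMkSucc (g.left.1.app 0) (𝟙 (a : ComposableArrows C n))
      (by
        have hw : g.left.1 ≫ v.hom.1 = u.hom.1 := congrArg Subtype.val (Over.w g)
        have := NatTrans.congr_app hw 0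
        dsimp at this ⊢
        exact (Category.comp_id _).trans this.symm),
    fun i hi => by
      obtain ⟨(_ | j), hij⟩ := i
      · exact absurd rfl hi
      · exact ⟨rfl, rfl⟩⟩
  map_id u := by
    apply Subtype.ext
    apply ComposableArrows.hom_ext_succ
    · rfl
    · rfl
  map_comp {u v w} g g' := by
    apply Subtype.ext
    apply ComposableArrows.hom_ext_succ
    · rfl
    · ext i
      obtain ⟨i, hi⟩ := i
      exact (Category.id_comp (𝟙 _)).symm

/-- The functor `Dec (Nw n C) ⥤ Nw (n+1) C`. -/
def Psi : Dec (Nw n C) ⥤ Nw (n + 1) C := Sigma.desc psiA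

/-- Two maps in a `Fin m`-indexed chain with the same endpoints agree up to `eqToHom`. -/
lemma finMapEq {m : ℕ} (X : Fin m ⥤ C) {i j i' j' : Fin m} (f : i ⟶ j) (g : i' ⟶ j')
    (hi : i = i') (hj : j' = j) :
    X.map f = eqToHom (congrArg X.obj hi) ≫ X.map g ≫ eqToHom (congrArg X.obj hj) := by
  subst hi; subst hj
  rw [Subsingleton.elim f g]; simp

/-- The monotone map `Fin (n+1) → Fin (n+2)` skipping `1`. -/
def d1F : Fin (n + 1) ⥤ Fin (n + 2) where
  obj i := match i with
    | ⟨0, _⟩ => ⟨0, by omega⟩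
    | ⟨j + 1, h⟩ => ⟨j + 2, by omega⟩
  map {i j} f := homOfLE (by
    obtain ⟨i, hi⟩ := i; obtain ⟨j, hj⟩ := j
    have hij := Fin.mk_le_mk.mp (leOfHom f)
    rcases i with _ | i <;> rcases j with _ | j <;>
      exact Fin.mk_le_mk.mpr (by omega))

lemma d1F_obj_succ {j : ℕ} (hj : j + 1 < n + 1) :
    (d1F (n := n)).obj ⟨j + 1, hj⟩ = ⟨j + 2, by omega⟩ := rfl

lemma d1F_obj_zero : (d1F (n := n)).obj 0 = 0 := rfl

/-- The natural transformation `d1F ⟶ succFunctor`. -/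
def tau1 : (d1F : Fin (n + 1) ⥤ Fin (n + 2)) ⟶ Fin.succFunctor (n + 1) where
  app i := homOfLE (by
    obtain ⟨(_ | i), hi⟩ := i
    · exact Fin.mk_le_mk.mpr (by omega)
    · exact Fin.mk_le_mk.mpr (by omega))
  naturality _ _ _ := Subsingleton.elim _ _

/-- the canonical map from the décalage chain to the tail chain -/
def dHom (X : ComposableArrows C (n + 1)) :
    (show Nw n C from d1F ⋙ X) ⟶ (show Nw n C from X.δ₀) :=
  ⟨Functor.whiskerRight tau1 X, fun i hi => by
    obtain ⟨(_ | j), hj⟩ := i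
    · exact absurd rfl hi
    · refine ⟨rfl, ?_⟩
      have : (tau1.app ⟨j + 1, hj⟩ : d1F.obj _ ⟶ _) = 𝟙 _ := Subsingleton.elim _ _
      rw [Functor.whiskerRight_app, this]
      exact X.map_id _⟩

lemma psi_obj_surj (X : Nw (n + 1) C) :
    Psi.obj ⟨(X : ComposableArrows C (n + 1)).δ₀, Over.mk (dHom X)⟩ = X := by
  refine ComposableArrows.ext_succ rfl rfl ?_
  show (X : ComposableArrows C (n + 1)).map (tau1.app 0) = _
  exact finMapEq X (tau1.app 0) (homOfLE (leOfHom (tau1.app 0))) rfl rfl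

section Retract

variable (a : ComposableArrows C n) (u : Over (show Nw n C from a))

/-- The chain underlying `u.left` is determined. -/
lemma dleft_eq :
    (d1F ⋙ (a.precomp ((u.hom.1.app 0 : u.left.obj 0 ⟶ a.obj 0))) : ComposableArrows C n)
      = (u.left : ComposableArrows C n) := by
  refine ComposableArrows.ext (fun i => ?_) (fun j hj => ?_)
  · obtain ⟨(_ | j), hj'⟩ := i
    · rfl
    · exact (u.hom.2 ⟨j + 1, hj'⟩ (by simp [Fin.ext_iff])).choose.symm
  · set P := a.precomp ((u.hom.1.app 0 : u.left.obj 0 ⟶ a.obj 0)) with hP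
    obtain _ | j := j
    · -- j = 0
      obtain ⟨h1, e1⟩ := u.hom.2 ⟨1, by omega⟩ (by simp [Fin.ext_iff])
      have e1' : ∀ (p : 1 < n + 1), u.hom.1.app ⟨1, p⟩ = eqToHom h1 := fun _ => e1
      have e := ComposableArrows.naturality'
        (F := (u.left : ComposableArrows C n)) (G := a) u.hom.1 0 1
      dsimp only [ComposableArrows.app'] at e
      rw [e1'] at e
      have efix : map' (u.left : ComposableArrows C n) 0 1 (by omega) (by omega) ≫ eqToHom h1 =
          u.hom.1.app 0 ≫ a.map' 0 1 (by omega) (by omega) := e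
      show P.map' 0 2 = _
      rw [P.map'_comp 0 1 2]
      have h01 : P.map' 0 1 = u.hom.1.app 0 := rfl
      have h12 : P.map' 1 2 = a.map' 0 1 := rfl
      erw [h01, h12, ← efix]
      exact (Category.id_comp _).symm
    · -- j + 1
      obtain ⟨h1, e1⟩ := u.hom.2 ⟨j + 1, by omega⟩ (by simp [Fin.ext_iff])
      obtain ⟨h2, e2⟩ := u.hom.2 ⟨j + 2, by omega⟩ (by simp [Fin.ext_iff])
      have e1' : ∀ (p : j + 1 < n + 1), u.hom.1.app ⟨j + 1, p⟩ = eqToHom h1 := fun _ => e1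
      have e2' : ∀ (p : j + 2 < n + 1), u.hom.1.app ⟨j + 2, p⟩ = eqToHom h2 := fun _ => e2
      have e := ComposableArrows.naturality'
        (F := (u.left : ComposableArrows C n)) (G := a) u.hom.1 (j + 1) (j + 2)
      dsimp only [ComposableArrows.app'] at e
      rw [e1', e2'] at e
      have efix : map' (u.left : ComposableArrows C n) (j + 1) (j + 2) (by omega) (by omega) ≫
          eqToHom h2 = eqToHom h1 ≫ a.map' (j + 1) (j + 2) (by omega) (by omega) := e
      show P.map' (j + 2) (j + 3) = _
      have h23 : P.map' (j + 2) (j + 3) = a.map' (j + 1) (j + 2) := rfl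
      rw [h23]
      have goal' : eqToHom h1.symm ≫ (map' (u.left : ComposableArrows C n) (j + 1) (j + 2)
          (by omega) (by omega) ≫ eqToHom h2) = a.map' (j + 1) (j + 2) (by omega) (by omega) := by
        rw [efix]; simp
      exact goal'.symm

lemma dhom_eq :
    dHom (a.precomp ((u.hom.1.app 0 : u.left.obj 0 ⟶ a.obj 0))) =
      eqToHom (show (show Nw n C from d1F ⋙ a.precomp ((u.hom.1.app 0 : u.left.obj 0 ⟶ a.obj 0)))
          = u.left from dleft_eq a u) ≫ u.hom := by
  apply Subtype.ext
  apply NatTrans.ext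
  funext i
  have hL : (show Nw n C from d1F ⋙ a.precomp ((u.hom.1.app 0 : u.left.obj 0 ⟶ a.obj 0)))
      = u.left := dleft_eq a u
  show (a.precomp ((u.hom.1.app 0 : u.left.obj 0 ⟶ a.obj 0))).map (tau1.app i) = _
  obtain ⟨(_ | j), hj⟩ := i
  · show _ = (eqToHom hL).1.app ⟨0, hj⟩ ≫ u.hom.1.app ⟨0, hj⟩
    rw [nw_eqToHom_app]
    exact (Category.id_comp _).symm
  · show _ = (eqToHom hL).1.app ⟨j + 1, hj⟩ ≫ u.hom.1.app ⟨j + 1, hj⟩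
    rw [nw_eqToHom_app]
    obtain ⟨h1, e1⟩ := u.hom.2 ⟨j + 1, hj⟩ (by simp [Fin.ext_iff])
    have e1' : ∀ (p : j + 1 < n + 1), u.hom.1.app ⟨j + 1, p⟩ = eqToHom h1 := fun _ => e1
    rw [e1', eqToHom_trans]
    rw [show (tau1.app ⟨j + 1, hj⟩ : d1F.obj _ ⟶ _) = 𝟙 _ from Subsingleton.elim _ _]
    exact CategoryTheory.Functor.map_id _ _

end Retract

/-- ext for objects of `Over`. -/
lemma overObjExt {T : Type u} [Category.{u} T] {t : T} {u v : Over t}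
    (h : u.left = v.left)
    (hw : u.hom = eqToHom (congrArg (𝟭 T).obj h) ≫ v.hom) : u = v := by
  obtain ⟨ul, ⟨⟨⟩⟩, uh⟩ := u
  obtain ⟨vl, ⟨⟨⟩⟩, vh⟩ := v
  change ul = vl at h
  subst h
  simp only [eqToHom_refl, Category.id_comp] at hw
  change uh = vh at hw
  subst hw
  rfl

/-- The retraction of `Psi` on objects. -/
def retr (X : Nw (n + 1) C) : Dec (Nw n C) :=
  ⟨(X : ComposableArrows C (n + 1)).δ₀, Over.mk (dHom X)⟩

lemma psi_retract (p : Dec (Nw n C)) : retr (Psi.obj p) = p := by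
  obtain ⟨a, u⟩ := p
  show (⟨a, Over.mk (dHom (a.precomp (u.hom.1.app 0)))⟩ : Dec (Nw n C)) = ⟨a, u⟩
  exact congrArg (fun v => (⟨a, v⟩ : Dec (Nw n C))) (overObjExt (dleft_eq a u) (dhom_eq a u))

lemma psi_obj_bij : Function.Bijective (Psi (n := n) (C := C)).obj := by
  constructor
  · intro p q h
    rw [← psi_retract p, ← psi_retract q, h]
  · intro X
    exact ⟨retr X, psi_obj_surj X⟩

/-- conjugation by degenerate `eqToHom`s. -/
lemma degenerate_conj {T : Type u} [Category.{u} T] {X X' Y Y' : T} (hX : X' = X) (hY : Y = Y')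
    (f : X ⟶ Y) (g : X' ⟶ Y') (hfg : HEq f g) :
    eqToHom hX ≫ f ≫ eqToHom hY = g := by
  subst hX; subst hY
  rw [eq_of_heq hfg]
  simp

/-- extensionality with `eqToHom` conjugation in `Nw` categories -/
lemma nw_ext_conj {m : ℕ} {T : Type u} [Category.{u} T] {X X' Y Y' : Nw m T} (hX : X' = X)
    (hY : Y = Y') (f : X ⟶ Y) (g : X' ⟶ Y') (h : ∀ i, HEq (f.1.app i) (g.1.app i)) :
    eqToHom hX ≫ f ≫ eqToHom hY = g := by
  subst hX; subst hY
  simp only [eqToHom_refl, Category.id_comp, Category.comp_id]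
  apply Subtype.ext
  apply NatTrans.ext
  funext i
  exact eq_of_heq (h i)

/-- Whisker an `Nw (n+1)`-morphism by `d1F`. -/
def whiskD {P Q : ComposableArrows C (n + 1)} (ψ : NwHom P Q) :
    (show Nw n C from d1F ⋙ P) ⟶ (show Nw n C from d1F ⋙ Q) :=
  ⟨Functor.whiskerLeft d1F ψ.1, fun i hi => by
    obtain ⟨(_ | j), hj⟩ := i
    · exact absurd rfl hi
    · obtain ⟨h, e⟩ := ψ.2 ⟨j + 2, by omega⟩ (by simp [Fin.ext_iff])
      exact ⟨h, e⟩⟩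

lemma psi_map_bij (p q : Dec (Nw n C)) :
    Function.Bijective ((Psi (n := n) (C := C)).map : (p ⟶ q) → _) := by
  obtain ⟨a, u⟩ := p
  obtain ⟨a', u'⟩ := q
  constructor
  · rintro ⟨γ⟩ ⟨γ'⟩ hgg
    congr 1
    apply Over.OverMorphism.ext
    apply Subtype.ext
    apply NatTrans.ext
    funext i
    obtain ⟨(_ | j), hj⟩ := i
    · exact congrArg (fun (χ : Psi.obj _ ⟶ Psi.obj _) => χ.1.app 0) hgg
    · obtain ⟨h1, e1⟩ := γ.left.2 ⟨j + 1, hj⟩ (by simp [Fin.ext_iff])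
      obtain ⟨h2, e2⟩ := γ'.left.2 ⟨j + 1, hj⟩ (by simp [Fin.ext_iff])
      rw [e1, e2]
  · intro ψ
    -- first, the bases agree
    have ha : a = a' := by
      refine ComposableArrows.ext (fun i => ?_) (fun j hj => ?_)
      · obtain ⟨i, hi⟩ := i
        exact (ψ.2 ⟨i + 1, by omega⟩ (by simp [Fin.ext_iff])).choose
      · obtain ⟨h1, e1⟩ := ψ.2 ⟨j + 1, by omega⟩ (by simp [Fin.ext_iff])
        obtain ⟨h2, e2⟩ := ψ.2 ⟨j + 2, by omega⟩ (by simp [Fin.ext_iff])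
        have e1' : ∀ (p : j + 1 < n + 2), ψ.1.app ⟨j + 1, p⟩ = eqToHom h1 := fun _ => e1
        have e2' : ∀ (p : j + 2 < n + 2), ψ.1.app ⟨j + 2, p⟩ = eqToHom h2 := fun _ => e2
        have e := ComposableArrows.naturality'
          (F := a.precomp (u.hom.1.app 0)) (G := a'.precomp (u'.hom.1.app 0))
          ψ.1 (j + 1) (j + 2)
        dsimp only [ComposableArrows.app'] at e
        rw [e1', e2'] at e
        have efix : map' a j (j + 1) (by omega) (by omega) ≫ eqToHom h2 =
          eqToHom h1 ≫ map' a' j (j + 1) (by omega) (by omega) := e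
        erw [comp_eqToHom_iff] at efix
        exact efix.trans (Category.assoc _ _ _)
    subst ha
    -- the δ₀-component of ψ is the identity
    have hδ : ComposableArrows.δ₀Functor.map ψ.1
        = 𝟙 (ComposableArrows.δ₀ (Psi.obj ⟨a, u⟩)) := by
      apply NatTrans.ext
      funext i
      obtain ⟨i, hi⟩ := i
      obtain ⟨h, e⟩ := ψ.2 ⟨i + 1, by omega⟩ (by simp [Fin.ext_iff])
      have e' : ∀ (p : i + 1 < n + 2), ψ.1.app ⟨i + 1, p⟩ = eqToHom h := fun _ => e
      show ψ.1.app ⟨i + 1, by omega⟩ = _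
      rw [e']
      rfl
    -- the exchange law
    have hkey : whiskD ψ ≫ dHom (a.precomp (u'.hom.1.app 0)) = dHom (a.precomp (u.hom.1.app 0)) := by
      apply Subtype.ext
      show Functor.whiskerLeft d1F ψ.1 ≫ Functor.whiskerRight tau1 _ = Functor.whiskerRight tau1 _
      have hexch : Functor.whiskerLeft d1F ψ.1 ≫ Functor.whiskerRight tau1 _ =
          Functor.whiskerRight tau1 _ ≫ Functor.whiskerLeft (Fin.succFunctor (n + 1)) ψ.1 := by
        apply NatTrans.ext
        funext i
        exact (ψ.1.naturality (tau1.app i)).symm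
      have hδ2 : Functor.whiskerLeft (Fin.succFunctor (n + 1)) ψ.1
          = 𝟙 (Fin.succFunctor (n + 1) ⋙ Psi.obj ⟨a, u⟩) := hδ
      rw [hexch, hδ2]
      exact Category.comp_id _
    have hLu := dhom_eq a u
    have hLu' := dhom_eq a u'
    rw [hLu, hLu'] at hkey
    -- build the Over morphism
    refine ⟨Sigma.SigmaHom.mk (Over.homMk
      (eqToHom (dleft_eq a u).symm ≫ whiskD ψ ≫ eqToHom (dleft_eq a u')) ?_), ?_⟩
    · erw [Category.assoc, Category.assoc, hkey, ← Category.assoc, eqToHom_trans, eqToHom_refl,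
        Category.id_comp]
    · apply Subtype.ext
      apply NatTrans.ext
      funext i
      obtain ⟨(_ | j), hj⟩ := i
      · show ((eqToHom (dleft_eq a u).symm : u.left ⟶ _).1 ≫ (whiskD ψ).1 ≫
          (eqToHom (dleft_eq a u') : _ ⟶ u'.left).1).app (0 : Fin (n + 1)) = ψ.1.app ⟨0, hj⟩
        erw [NatTrans.comp_app, NatTrans.comp_app, nw_eqToHom_app, nw_eqToHom_app]
        exact degenerate_conj _ _ _ _ HEq.rfl
      · obtain ⟨h, e⟩ := ψ.2 ⟨j + 1, hj⟩ (by simp [Fin.ext_iff])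
        have e' : ∀ (p : j + 1 < n + 2), ψ.1.app ⟨j + 1, p⟩ = eqToHom h := fun _ => e
        rw [e' hj]
        rfl

/-- `Psi` as an isomorphism in `Cat`. -/
noncomputable def stepIso (C : Type u) [Category.{u} C] (n : ℕ) :
    Cat.of (Dec (Nw n C)) ≅ Cat.of (Nw (n + 1) C) :=
  isoOfBijective Psi psi_obj_bij (fun p q => psi_map_bij p q)

end StepIso

lemma decMap_id (C : Type u) [Category.{u} C] : decMap (𝟭 C) = 𝟭 (Dec C) := by
  refine CategoryTheory.Functor.ext (fun p => rfl) ?_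
  intro X Y g
  change Sigma.SigmaHom X Y at g
  cases g
  erw [eqToHom_refl, eqToHom_refl, Category.id_comp, Category.comp_id]
  rfl

lemma decMap_comp {C D E : Type u} [Category.{u} C] [Category.{u} D] [Category.{u} E]
    (F : C ⥤ D) (G : D ⥤ E) : decMap (F ⋙ G) = decMap F ⋙ decMap G := by
  refine CategoryTheory.Functor.ext (fun p => rfl) ?_
  intro X Y g
  change Sigma.SigmaHom X Y at g
  cases g
  erw [eqToHom_refl, eqToHom_refl, Category.id_comp, Category.comp_id]
  rfl

/-- `Dec` applied to an isomorphism in `Cat`. -/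
def decCatIso {A B : Cat.{u, u}} (E : A ≅ B) : Cat.of (Dec A) ≅ Cat.of (Dec B) where
  hom := (decMap E.hom.toFunctor).toCatHom
  inv := (decMap E.inv.toFunctor).toCatHom
  hom_inv_id := by
    apply Cat.ext
    show decMap E.hom.toFunctor ⋙ decMap E.inv.toFunctor = 𝟭 _
    rw [← decMap_comp, show E.hom.toFunctor ⋙ E.inv.toFunctor = 𝟭 (A : Type u) from congrArg Cat.Hom.toFunctor E.hom_inv_id, decMap_id]
  inv_hom_id := by
    apply Cat.ext
    show decMap E.inv.toFunctor ⋙ decMap E.hom.toFunctor = 𝟭 _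
    rw [← decMap_comp, show E.inv.toFunctor ⋙ E.hom.toFunctor = 𝟭 (B : Type u) from congrArg Cat.Hom.toFunctor E.inv_hom_id, decMap_id]

section StepNat

open ComposableArrows StepIso

variable {n : ℕ} {C D : Type u} [Category.{u} C] [Category.{u} D] (F : C ⥤ D)

lemma step_natural :
    (Psi (n := n) (C := C)) ⋙ NwMap (n + 1) F = decMap (NwMap n F) ⋙ Psi := by
  have hobj : ∀ p : Dec (Nw n C),
      ((Psi (n := n) (C := C)) ⋙ NwMap (n + 1) F).obj p = (decMap (NwMap n F) ⋙ Psi).obj p := by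
    rintro ⟨a, u⟩
    refine ComposableArrows.ext_succ rfl rfl ?_
    exact (degenerate_conj _ _ _ _ HEq.rfl).symm
  refine CategoryTheory.Functor.ext hobj ?_
  intro X Y g
  refine (nw_ext_conj _ _ _ _ ?_).symm
  intro i
  obtain ⟨a, u⟩ := X
  obtain ⟨a2, u2⟩ := Y
  change Sigma.SigmaHom _ _ at g
  cases g with
  | mk γ =>
  obtain ⟨(_ | j), hj⟩ := i
  · exact HEq.rfl
  · exact heq_of_eq (CategoryTheory.Functor.map_id F (a.obj ⟨j, by omega⟩)).symm

end StepNat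

/-- For every category `C` and every `n ≥ 0` there is an isomorphism of categories
`N^w_n(C) ≅ 𝔻ⁿ(C)` (an isomorphism in `Cat`), and these isomorphisms are natural in `C`. -/
theorem stmt9 (n : ℕ) :
    ∃ e : ∀ C : Cat.{u, u}, Cat.of (Nw n C) ≅ decIter n C,
      ∀ (C D : Cat.{u, u}) (F : C ⟶ D),
        ((NwMap n F.toFunctor).toCatHom ≫ (e D).hom : Cat.of (Nw n C) ⟶ decIter n D) =
          (e C).hom ≫ decIterMap n F := by
  induction n with
  | zero =>
    exact ⟨fun C => isoOfBijective (nw0Functor C) (nw0_obj_bij C) (nw0_map_bij C),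
      fun C D F => rfl⟩
  | succ n ih =>
    obtain ⟨e, he⟩ := ih
    refine ⟨fun C => (StepIso.stepIso C n).symm ≪≫ decCatIso (e C), ?_⟩
    intro C D F
    have h1 : ((StepIso.stepIso (C : Type u) n).hom ≫ (NwMap (n + 1) F.toFunctor).toCatHom :
        Cat.of (Dec (Nw n C)) ⟶ Cat.of (Nw (n + 1) D)) =
        (decMap (NwMap n F.toFunctor)).toCatHom ≫ (StepIso.stepIso (D : Type u) n).hom :=
      congrArg Functor.toCatHom (step_natural F.toFunctor)
    have h2 : ((NwMap (n + 1) F.toFunctor).toCatHom ≫ (StepIso.stepIso (D : Type u) n).inv :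
        Cat.of (Nw (n + 1) C) ⟶ Cat.of (Dec (Nw n D))) =
        (StepIso.stepIso (C : Type u) n).inv ≫ (decMap (NwMap n F.toFunctor)).toCatHom := by
      rw [Iso.comp_inv_eq, Category.assoc, ← h1, ← Category.assoc, Iso.inv_hom_id,
        Category.id_comp]
    show (NwMap (n + 1) F.toFunctor).toCatHom ≫ (StepIso.stepIso D n).inv ≫ (decCatIso (e D)).hom =
      ((StepIso.stepIso C n).inv ≫ (decCatIso (e C)).hom) ≫ decIterMap (n + 1) F
    erw [← Category.assoc, h2, Category.assoc, Category.assoc]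
    congr 1
    apply Cat.ext
    show decMap (NwMap n F.toFunctor) ⋙ decMap (e D).hom.toFunctor =
      decMap (e C).hom.toFunctor ⋙ decMap (decIterMap n F).toFunctor
    erw [← decMap_comp, ← decMap_comp]
    exact congrArg decMap (congrArg Cat.Hom.toFunctor (he C D F))
end

section
/- For every category C and every n ≥ 0, let Ñ^w_{n+1}(C) be the wide subcategory of ComposableArrows C (n+1) (chains of n+1 composable morphisms in C) whose morphisms are those natural transformations (commutative ladders) φ such that the last component φ_{n+1} is the identity. Let 𝔻(C) := Σ (a : C), Over a denote the décalage of C. Then there is an isomorphism of categories Ñ^w_{n+1}(C) ≅ ComposableArrows (𝔻(C)) n (the category of chains of n composable morphisms in 𝔻(C)), and these isomorphisms are natural in C. -/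
open CategoryTheory

universe u

/-- Morphisms of the wide subcategory `Ñ^w_{n+1}(C)` of `ComposableArrows C (n+1)`:
ladders `φ` whose last component `φ_{n+1}` is the identity. -/
def NtwHom {n : ℕ} {C : Type u} [Category.{u} C] (X Y : ComposableArrows C (n + 1)) :
    Type u :=
  {φ : X ⟶ Y // ∃ h : X.obj (Fin.last (n + 1)) = Y.obj (Fin.last (n + 1)),
      φ.app (Fin.last (n + 1)) = eqToHom h}

/-- `Ñ^w_{n+1}(C)`: the wide subcategory of `ComposableArrows C (n+1)` (chains of `n+1`
composable morphisms of `C`) whose morphisms are the ladders whose last component is the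
identity. -/
def Ntw (n : ℕ) (C : Type u) [Category.{u} C] : Type u := ComposableArrows C (n + 1)

instance (n : ℕ) (C : Type u) [Category.{u} C] : Category.{u} (Ntw n C) where
  Hom X Y := NtwHom X Y
  id X := ⟨𝟙 _, ⟨rfl, rfl⟩⟩
  comp φ ψ := ⟨φ.1 ≫ ψ.1, by
    obtain ⟨h1, e1⟩ := φ.2
    obtain ⟨h2, e2⟩ := ψ.2
    exact ⟨h1.trans h2, show φ.1.app _ ≫ ψ.1.app _ = _ by rw [e1, e2, eqToHom_trans]⟩⟩
  id_comp φ := Subtype.ext (Category.id_comp _)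
  comp_id φ := Subtype.ext (Category.comp_id _)
  assoc φ ψ χ := Subtype.ext (Category.assoc _ _ _)

/-- The functor `Ñ^w_{n+1}(C) ⥤ Ñ^w_{n+1}(D)` induced by a functor `F : C ⥤ D`. -/
def NtwMap (n : ℕ) {C D : Type u} [Category.{u} C] [Category.{u} D] (F : C ⥤ D) :
    Ntw n C ⥤ Ntw n D where
  obj X := X ⋙ F
  map {X Y} φ := ⟨Functor.whiskerRight φ.1 F, by
    obtain ⟨h, e⟩ := φ.2
    exact ⟨congrArg F.obj h, show F.map (φ.1.app _) = _ by rw [e, eqToHom_map]⟩⟩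
  map_id X := Subtype.ext (by ext i; exact F.map_id _)
  map_comp φ ψ := Subtype.ext (by ext i; exact F.map_comp _ _)

namespace Stmt11
variable {C D : Type u} [Category.{u} C] [Category.{u} D]

theorem decHomBase {p q : (Σ a : C, Over a)} (m : p ⟶ q) : p.1 = q.1 :=
  match p, q, m with
  | _, _, Sigma.SigmaHom.mk _ => rfl
def decHomLeft {p q : (Σ a : C, Over a)} (m : p ⟶ q) : p.2.left ⟶ q.2.left :=
  match p, q, m with
  | _, _, Sigma.SigmaHom.mk f => f.left
theorem decHomLeft_w {p q : (Σ a : C, Over a)} (m : p ⟶ q) :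
    decHomLeft m ≫ q.2.hom = p.2.hom ≫ eqToHom (decHomBase m) := by
  rcases m with ⟨f⟩
  simpa [decHomLeft] using Over.w f
@[simp] theorem decHomLeft_id (p : (Σ a : C, Over a)) : decHomLeft (𝟙 p) = 𝟙 _ := by
  obtain ⟨a, f⟩ := p; rfl
@[simp] theorem decHomLeft_comp {p q r : (Σ a : C, Over a)} (m : p ⟶ q) (m' : q ⟶ r) :
    decHomLeft (m ≫ m') = decHomLeft m ≫ decHomLeft m' := by
  rcases m with ⟨f⟩; rcases m' with ⟨g⟩; rfl
theorem dec_hom_ext {p q : (Σ a : C, Over a)} {m m' : p ⟶ q} (h : decHomLeft m = decHomLeft m') :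
    m = m' := by
  rcases m with ⟨f⟩
  rcases m' with ⟨g⟩
  exact congrArg Sigma.SigmaHom.mk (Over.OverMorphism.ext h)
@[simp] theorem decHomLeft_eqToHom {p q : (Σ a : C, Over a)} (h : p = q) :
    decHomLeft (eqToHom h) = eqToHom (congrArg (fun r : (Σ a : C, Over a) => r.2.left) h) := by
  subst h; simp
def decHom {p q : (Σ a : C, Over a)} (h : p.1 = q.1) (u : p.2.left ⟶ q.2.left)
    (w : u ≫ q.2.hom = p.2.hom ≫ eqToHom h) : p ⟶ q :=
  match p, q, h, u, w with
  | ⟨a, f⟩, ⟨_, g⟩, rfl, u, w => Sigma.SigmaHom.mk (Over.homMk u (by simpa using w))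
@[simp] theorem decHomLeft_decHom {p q : (Σ a : C, Over a)} (h : p.1 = q.1) (u : p.2.left ⟶ q.2.left) (w) :
    decHomLeft (decHom h u w) = u := by
  obtain ⟨a, f⟩ := p; obtain ⟨b, g⟩ := q; obtain rfl : a = b := h; rfl

@[simp] theorem decHomLeft_decMap (F : C ⥤ D) {p q : (Σ a : C, Over a)} (m : p ⟶ q) :
    decHomLeft ((decMap F).map m) = F.map (decHomLeft m) := by
  rcases m with ⟨f⟩; rfl

variable (n : ℕ)

/-- The object part of `Φ`. -/
@[simps]
def phiObj (X : ComposableArrows C (n + 1)) : ComposableArrows ((Σ a : C, Over a)) n where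
  obj i := ⟨X.obj (Fin.last (n + 1)), Over.mk (X.map (homOfLE (Fin.le_last i.castSucc)))⟩
  map {i j} f := decHom rfl
    (X.map (homOfLE (Fin.castSucc_le_castSucc_iff.mpr (leOfHom f))))
    (by
      dsimp
      rw [Category.comp_id, ← X.map_comp]
      rfl)
  map_id i := dec_hom_ext (by
    exact X.map_id _)
  map_comp {i j k} f g := dec_hom_ext (by
    exact X.map_comp _ _)

/-- The morphism part of `Φ`. -/
def phiMap {X Y : Ntw n C} (φ : X ⟶ Y) : phiObj n X ⟶ phiObj n Y where
  app i := decHom φ.2.choose (φ.1.app i.castSucc) (by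
    show φ.1.app i.castSucc ≫ Y.map (homOfLE (Fin.le_last i.castSucc)) =
      X.map (homOfLE (Fin.le_last i.castSucc)) ≫ eqToHom φ.2.choose
    rw [← φ.2.choose_spec]
    exact (φ.1.naturality (homOfLE (Fin.le_last i.castSucc))).symm)
  naturality i j f := dec_hom_ext (by
    simp only [decHomLeft_comp, decHomLeft_decHom, phiObj_map, decHomLeft_decHom]
    exact (congrArg₂ (· ≫ ·) rfl (decHomLeft_decHom _ _ _)).trans
      ((φ.1.naturality _).trans (congrArg₂ (· ≫ ·)
        (decHomLeft_decHom (p := (phiObj n X).obj i) (q := (phiObj n Y).obj i) _ _ _).symm rfl)))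

@[simp] theorem decHomLeft_phiMap_app {X Y : Ntw n C} (φ : X ⟶ Y) (i : Fin (n + 1)) :
    decHomLeft ((phiMap n φ).app i) = φ.1.app i.castSucc := by
  exact decHomLeft_decHom _ _ _

/-- The functor `Φ : Ñ^w_{n+1}(C) ⥤ ComposableArrows (𝔻 C) n`. -/
def phi : Ntw n C ⥤ ComposableArrows ((Σ a : C, Over a)) n where
  obj X := phiObj n X
  map φ := phiMap n φ
  map_id X := by
    ext i
    apply dec_hom_ext
    simp
    rfl
  map_comp φ ψ := by
    ext i
    apply dec_hom_ext
    simp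
    rfl

/-- object part of objects of `Ψ` -/
def psiObjObj (Y : ComposableArrows ((Σ a : C, Over a)) n) : Fin (n + 2) → C :=
  Fin.lastCases ((Y.obj (Fin.last n)).1) (fun i => (Y.obj i).2.left)

@[simp] theorem psiObjObj_castSucc (Y : ComposableArrows ((Σ a : C, Over a)) n) (i : Fin (n + 1)) :
    psiObjObj n Y i.castSucc = (Y.obj i).2.left := by
  simp [psiObjObj]

@[simp] theorem psiObjObj_last (Y : ComposableArrows ((Σ a : C, Over a)) n) :
    psiObjObj n Y (Fin.last (n + 1)) = (Y.obj (Fin.last n)).1 := by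
  simp [psiObjObj]

theorem psiObjObj_mk (Y : ComposableArrows ((Σ a : C, Over a)) n) (i : ℕ) (hi : i ≤ n)
    (hi2 : i < n + 2) :
    psiObjObj n Y ⟨i, hi2⟩ = (Y.obj ⟨i, by omega⟩).2.left :=
  psiObjObj_castSucc n Y ⟨i, by omega⟩

/-- the successor maps of objects of `Ψ` -/
def psiSucc (Y : ComposableArrows ((Σ a : C, Over a)) n) (i : Fin (n + 1)) :
    psiObjObj n Y i.castSucc ⟶ psiObjObj n Y i.succ :=
  Fin.lastCases (motive := fun i => psiObjObj n Y i.castSucc ⟶ psiObjObj n Y i.succ)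
    (eqToHom (psiObjObj_castSucc n Y (Fin.last n)) ≫ (Y.obj (Fin.last n)).2.hom ≫
      eqToHom (by rw [Fin.succ_last]; exact (psiObjObj_last n Y).symm))
    (fun i => eqToHom (psiObjObj_castSucc n Y i.castSucc) ≫
      decHomLeft (Y.map (homOfLE (Fin.castSucc_le_succ i))) ≫
      eqToHom (by rw [Fin.succ_castSucc]; exact (psiObjObj_castSucc n Y i.succ).symm))
    i

/-- object part of `Ψ` -/
noncomputable def psiObj (Y : ComposableArrows ((Σ a : C, Over a)) n) : ComposableArrows C (n + 1) :=
  ComposableArrows.mkOfObjOfMapSucc (psiObjObj n Y) (psiSucc n Y)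

theorem psiSucc_lt (Y : ComposableArrows ((Σ a : C, Over a)) n) (j : ℕ) (hj : j < n) (hj1 : j < n + 1) :
    psiSucc n Y ⟨j, hj1⟩ =
      eqToHom (psiObjObj_mk n Y j (by omega) (by omega)) ≫
        decHomLeft (Y.map' j (j + 1) (by omega) (by omega)) ≫
        eqToHom (psiObjObj_mk n Y (j + 1) (by omega) (by omega)).symm := by
  show psiSucc n Y (Fin.castSucc ⟨j, hj⟩) = _
  rw [psiSucc, Fin.lastCases_castSucc]

theorem psiSucc_n (Y : ComposableArrows ((Σ a : C, Over a)) n) (hj1 : n < n + 1) :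
    psiSucc n Y ⟨n, hj1⟩ =
      eqToHom (psiObjObj_mk n Y n le_rfl (by omega)) ≫ (Y.obj (Fin.last n)).2.hom ≫
        eqToHom (psiObjObj_last n Y).symm := by
  show psiSucc n Y (Fin.last n) = _
  rw [psiSucc, Fin.lastCases_last]

theorem psiObj_map' (Y : ComposableArrows ((Σ a : C, Over a)) n) (i j : ℕ) (hij : i ≤ j) (hj : j ≤ n) :
    (psiObj n Y).map' i j (by omega) (by omega) =
      eqToHom (psiObjObj_mk n Y i (by omega) (by omega)) ≫
        decHomLeft (Y.map' i j hij hj) ≫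
        eqToHom (psiObjObj_mk n Y j hj (by omega)).symm := by
  induction j, hij using Nat.le_induction with
  | base =>
    rw [(psiObj n Y).map'_self i (by omega), Y.map'_self i (by omega)]
    simp
    rfl
  | succ j hij ih =>
    rw [(psiObj n Y).map'_comp i j (j + 1) (by omega) (by omega) (by omega),
      ih (by omega),
      show (psiObj n Y).map' j (j + 1) (by omega) (by omega) = psiSucc n Y ⟨j, by omega⟩ from
        ComposableArrows.mkOfObjOfMapSucc_map_succ _ _ j (by omega),
      psiSucc_lt n Y j (by omega) (by omega),
      Y.map'_comp i j (j + 1) (by omega) (by omega) (by omega), decHomLeft_comp]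
    dsimp only [psiObj, ComposableArrows.mkOfObjOfMapSucc_obj]
    simp

theorem psiObj_map_full (Y : ComposableArrows ((Σ a : C, Over a)) n) (i : ℕ) (hi : i ≤ n) :
    (psiObj n Y).map' i (n + 1) (by omega) (by omega) =
      eqToHom (psiObjObj_mk n Y i hi (by omega)) ≫ (Y.obj ⟨i, by omega⟩).2.hom ≫
        eqToHom ((decHomBase (Y.map' i n hi le_rfl)).trans (psiObjObj_last n Y).symm) := by
  rw [(psiObj n Y).map'_comp i n (n + 1) (by omega) (by omega) (by omega),
    psiObj_map' n Y i n hi le_rfl,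
    show (psiObj n Y).map' n (n + 1) (by omega) (by omega) = psiSucc n Y ⟨n, by omega⟩ from
      ComposableArrows.mkOfObjOfMapSucc_map_succ _ _ n (by omega),
    psiSucc_n n Y (by omega)]
  have w : decHomLeft (Y.map' i n hi le_rfl) ≫ (Y.obj (Fin.last n)).2.hom =
      (Y.obj ⟨i, by omega⟩).2.hom ≫ eqToHom (decHomBase (Y.map' i n hi le_rfl)) :=
    decHomLeft_w (Y.map' i n hi le_rfl)
  dsimp only [psiObj, ComposableArrows.mkOfObjOfMapSucc_obj]
  simp only [Category.assoc, eqToHom_trans_assoc, eqToHom_refl, Category.id_comp]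
  rw [reassoc_of% w]
  simp

/-- components of morphisms of `Ψ` -/
def psiApp {Y Y' : ComposableArrows ((Σ a : C, Over a)) n} (ψ : Y ⟶ Y') (j : Fin (n + 2)) :
    psiObjObj n Y j ⟶ psiObjObj n Y' j :=
  Fin.lastCases (motive := fun j => psiObjObj n Y j ⟶ psiObjObj n Y' j)
    (eqToHom ((psiObjObj_last n Y).trans
      ((decHomBase (ψ.app (Fin.last n))).trans (psiObjObj_last n Y').symm)))
    (fun i => eqToHom (psiObjObj_castSucc n Y i) ≫ decHomLeft (ψ.app i) ≫
      eqToHom (psiObjObj_castSucc n Y' i).symm) j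

@[simp] theorem psiApp_castSucc {Y Y' : ComposableArrows ((Σ a : C, Over a)) n} (ψ : Y ⟶ Y')
    (i : Fin (n + 1)) :
    psiApp n ψ i.castSucc = eqToHom (psiObjObj_castSucc n Y i) ≫ decHomLeft (ψ.app i) ≫
      eqToHom (psiObjObj_castSucc n Y' i).symm := by
  rw [psiApp, Fin.lastCases_castSucc]

@[simp] theorem psiApp_last {Y Y' : ComposableArrows ((Σ a : C, Over a)) n} (ψ : Y ⟶ Y') :
    psiApp n ψ (Fin.last (n + 1)) = eqToHom ((psiObjObj_last n Y).trans
      ((decHomBase (ψ.app (Fin.last n))).trans (psiObjObj_last n Y').symm)) := by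
  rw [psiApp, Fin.lastCases_last]

theorem psiApp_mk {Y Y' : ComposableArrows ((Σ a : C, Over a)) n} (ψ : Y ⟶ Y') (i : ℕ) (hi : i ≤ n)
    (hi2 : i < n + 2) :
    psiApp n ψ ⟨i, hi2⟩ = eqToHom (psiObjObj_mk n Y i hi hi2) ≫
      decHomLeft (ψ.app ⟨i, by omega⟩) ≫ eqToHom (psiObjObj_mk n Y' i hi hi2).symm :=
  psiApp_castSucc n ψ ⟨i, by omega⟩

/-- morphism part of `Ψ` -/
noncomputable def psiMap {Y Y' : ComposableArrows ((Σ a : C, Over a)) n} (ψ : Y ⟶ Y') :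
    @Quiver.Hom (Ntw n C) _ (psiObj n Y) (psiObj n Y') :=
  ⟨ComposableArrows.homMk (psiApp n ψ) (by
      intro i hi
      rw [show (psiObj n Y).map' i (i + 1) (by omega) (by omega) = psiSucc n Y ⟨i, by omega⟩
          from ComposableArrows.mkOfObjOfMapSucc_map_succ _ _ i (by omega),
        show (psiObj n Y').map' i (i + 1) (by omega) (by omega) = psiSucc n Y' ⟨i, by omega⟩
          from ComposableArrows.mkOfObjOfMapSucc_map_succ _ _ i (by omega)]
      rcases Nat.lt_or_ge i n with h | h
      · rw [psiSucc_lt n Y i h (by omega), psiSucc_lt n Y' i h (by omega),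
          show psiApp n ψ ⟨i, by omega⟩ = _ from psiApp_mk n ψ i (by omega) (by omega),
          show psiApp n ψ ⟨i + 1, by omega⟩ = _ from psiApp_mk n ψ (i + 1) (by omega) (by omega)]
        have e : decHomLeft (Y.map' i (i + 1) (by omega) (by omega)) ≫
            decHomLeft (ψ.app ⟨i + 1, by omega⟩) =
            decHomLeft (ψ.app ⟨i, by omega⟩) ≫
              decHomLeft (Y'.map' i (i + 1) (by omega) (by omega)) := by
          rw [← decHomLeft_comp, ← decHomLeft_comp, ψ.naturality]
        dsimp only [psiObj, ComposableArrows.mkOfObjOfMapSucc_obj]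
        simp only [Category.assoc, eqToHom_trans_assoc, eqToHom_refl, Category.id_comp]
        rw [reassoc_of% e]
      · obtain rfl : n = i := by omega
        rw [psiSucc_n n Y (by omega), psiSucc_n n Y' (by omega),
          show psiApp n ψ ⟨n, by omega⟩ = _ from psiApp_mk n ψ n (by omega) (by omega),
          show psiApp n ψ ⟨n + 1, by omega⟩ = _ from psiApp_last n ψ]
        have w : decHomLeft (ψ.app (Fin.last n)) ≫ (Y'.obj (Fin.last n)).2.hom =
            (Y.obj (Fin.last n)).2.hom ≫ eqToHom (decHomBase (ψ.app (Fin.last n))) :=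
          decHomLeft_w (ψ.app (Fin.last n))
        dsimp only [psiObj, ComposableArrows.mkOfObjOfMapSucc_obj]
        simp only [Category.assoc, eqToHom_trans_assoc, eqToHom_refl, Category.id_comp]
        rw [show ψ.app ⟨n, by omega⟩ = ψ.app (Fin.last n) from rfl, reassoc_of% w]
        simp),
    ⟨(psiObjObj_last n Y).trans
      ((decHomBase (ψ.app (Fin.last n))).trans (psiObjObj_last n Y').symm), by
      exact psiApp_last n ψ⟩⟩

theorem ntw_comp_val {X Y Z : Ntw n C} (f : X ⟶ Y) (g : Y ⟶ Z) :
    (f ≫ g).1 = f.1 ≫ g.1 := rfl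

theorem ntw_id_val (X : Ntw n C) : (𝟙 X : X ⟶ X).1 = 𝟙 _ := rfl

@[simp] theorem psiMap_app {Y Y' : ComposableArrows ((Σ a : C, Over a)) n} (ψ : Y ⟶ Y') (j : Fin (n + 2)) :
    (psiMap n ψ).1.app j = psiApp n ψ j := by
  rfl

/-- The functor `Ψ : ComposableArrows (𝔻 C) n ⥤ Ñ^w_{n+1}(C)`. -/
noncomputable def psi : ComposableArrows ((Σ a : C, Over a)) n ⥤ Ntw n C where
  obj Y := psiObj n Y
  map ψ := psiMap n ψ
  map_id Y := Subtype.ext (by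
    show _ = 𝟙 (psiObj n Y)
    ext j
    rw [NatTrans.id_app]
    rw [psiMap_app]
    induction j using Fin.lastCases with
    | last => simp; rfl
    | cast i => simp; rfl)
  map_comp ψ ψ' := Subtype.ext (by
    show _ = (psiMap n ψ).1 ≫ (psiMap n ψ').1
    ext j
    rw [NatTrans.comp_app, psiMap_app, psiMap_app, psiMap_app]
    induction j using Fin.lastCases with
    | last => simp only [psiApp_last]; exact (eqToHom_trans _ _).symm
    | cast i => dsimp only [psiObj, ComposableArrows.mkOfObjOfMapSucc_obj]; simp)

theorem dec_obj_ext {p q : (Σ a : C, Over a)} (h : p.1 = q.1) (hl : p.2.left = q.2.left)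
    (hh : p.2.hom = eqToHom hl ≫ q.2.hom ≫ eqToHom h.symm) : p = q := by
  obtain ⟨a, f⟩ := p; obtain ⟨b, g⟩ := q
  obtain rfl : a = b := h
  obtain ⟨fl, fr, fh⟩ := f; obtain ⟨gl, gr, gh⟩ := g
  obtain rfl : fl = gl := hl
  obtain rfl : fr = gr := Subsingleton.elim _ _
  simp only [eqToHom_refl, Category.id_comp, Category.comp_id] at hh
  subst hh
  rfl

theorem ntw_eqToHom_app {X Y : Ntw n C} (h : X = Y) (j : Fin (n + 2)) :
    (eqToHom h).1.app j =
      eqToHom (congrArg (fun Z : ComposableArrows C (n + 1) => Z.obj j) h) := by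
  subst h; rfl

theorem decHomLeft_phiObj_map' (X : ComposableArrows C (n + 1)) (i j : ℕ)
    (hij : i ≤ j) (hj : j ≤ n) :
    decHomLeft ((phiObj n X).map' i j hij hj) = X.map' i j (by omega) (by omega) := rfl

theorem psiObj_phiObj (X : ComposableArrows C (n + 1)) : psiObj n (phiObj n X) = X := by
  refine ComposableArrows.ext (fun j => ?_) (fun i hi => ?_)
  · show psiObjObj n (phiObj n X) j = X.obj j
    induction j using Fin.lastCases with
    | last => rw [psiObjObj_last]; rfl
    | cast i => rw [psiObjObj_castSucc]; rfl
  · rcases Nat.lt_or_ge i n with h | h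
    · rw [show (psiObj n (phiObj n X)).map' i (i + 1) (by omega) (by omega) =
          psiSucc n (phiObj n X) ⟨i, by omega⟩ from
          ComposableArrows.mkOfObjOfMapSucc_map_succ _ _ i (by omega),
        psiSucc_lt n _ i h (by omega), decHomLeft_phiObj_map']
      rfl
    · obtain rfl : n = i := by omega
      rw [show (psiObj n (phiObj n X)).map' n (n + 1) (by omega) (by omega) =
          psiSucc n (phiObj n X) ⟨n, by omega⟩ from
          ComposableArrows.mkOfObjOfMapSucc_map_succ _ _ n (by omega),
        psiSucc_n n _ (by omega)]
      rfl

@[simp] theorem phi_obj (X : Ntw n C) : (phi n).obj X = phiObj n X := rfl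
@[simp] theorem phi_map {X Y : Ntw n C} (φ : X ⟶ Y) : (phi n).map φ = phiMap n φ := rfl
@[simp] theorem psi_obj (Y : ComposableArrows ((Σ a : C, Over a)) n) : (psi n).obj Y = psiObj n Y := rfl
@[simp] theorem psi_map {Y Y' : ComposableArrows ((Σ a : C, Over a)) n} (ψ : Y ⟶ Y') :
    (psi n).map ψ = psiMap n ψ := rfl

theorem phiObj_psiObj (Y : ComposableArrows ((Σ a : C, Over a)) n) : phiObj n (psiObj n Y) = Y := by
  refine ComposableArrows.ext (fun i => ?_) (fun i hi => ?_)
  · refine dec_obj_ext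
      ((psiObjObj_last n Y).trans
        (decHomBase (Y.map (homOfLE (Fin.le_last i)))).symm)
      (psiObjObj_castSucc n Y i)
      ?_
    exact psiObj_map_full n Y i.1 (by omega)
  · apply dec_hom_ext
    rw [decHomLeft_phiObj_map' n (psiObj n Y) i (i + 1) (by omega) (by omega),
      psiObj_map' n Y i (i + 1) (by omega) (by omega)]
    simp only [decHomLeft_comp, decHomLeft_eqToHom]
    rfl

theorem psi_phi : phi n ⋙ psi n = 𝟭 (Ntw n C) := by
  refine CategoryTheory.Functor.ext (fun X => psiObj_phiObj n X) (fun X X' φ => ?_)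
  obtain ⟨hφ, eφ⟩ := φ.2
  apply Subtype.ext
  rw [show ((phi n ⋙ psi n).map φ).1 = (psiMap n (phiMap n φ)).1 from rfl,
    ntw_comp_val, ntw_comp_val]
  ext j
  erw [NatTrans.comp_app, NatTrans.comp_app, psiMap_app]
  rw [show ((𝟭 (Ntw n C)).map φ).1 = φ.1 from rfl]
  induction j using Fin.lastCases with
  | last =>
    erw [psiApp_last, ntw_eqToHom_app, ntw_eqToHom_app, eφ]
    simp
    rfl
  | cast i =>
    erw [psiApp_castSucc, ntw_eqToHom_app, ntw_eqToHom_app, decHomLeft_phiMap_app]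
    rfl

theorem phi_psi : psi n ⋙ phi n = 𝟭 (ComposableArrows ((Σ a : C, Over a)) n) := by
  refine CategoryTheory.Functor.ext (fun Y => phiObj_psiObj n Y) (fun Y Y' ψ => ?_)
  ext i
  apply dec_hom_ext
  erw [show ((psi n ⋙ phi n).map ψ).app i = (phiMap n (psiMap n ψ)).app i from rfl,
    decHomLeft_phiMap_app, psiMap_app, psiApp_castSucc,
    show (𝟭 (ComposableArrows ((Σ a : C, Over a)) n)).map ψ = ψ from rfl]
  erw [NatTrans.comp_app, NatTrans.comp_app, decHomLeft_comp, decHomLeft_comp, eqToHom_app,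
    eqToHom_app, decHomLeft_eqToHom, decHomLeft_eqToHom]
  rfl

theorem phi_natural (F : C ⥤ D) :
    NtwMap n F ⋙ phi n =
      phi n ⋙ (Functor.whiskeringRight (Fin (n + 1)) ((Σ a : C, Over a)) ((Σ a : D, Over a))).obj (decMap F) := by
  refine CategoryTheory.Functor.ext (fun X => ?_) (fun X Y φ => ?_)
  · rfl
  · ext i
    apply dec_hom_ext
    erw [show ((NtwMap n F ⋙ phi n).map φ).app i = (phiMap n ((NtwMap n F).map φ)).app i
        from rfl,
      decHomLeft_phiMap_app]
    rw [NatTrans.comp_app, NatTrans.comp_app]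
    rw [show ((phi n ⋙ (Functor.whiskeringRight (Fin (n + 1)) ((Σ a : C, Over a)) ((Σ a : D, Over a))).obj (decMap F)).map φ).app i
        = (decMap F).map ((phiMap n φ).app i) from rfl]
    erw [eqToHom_app, eqToHom_app, decHomLeft_comp, decHomLeft_comp, decHomLeft_eqToHom,
      decHomLeft_eqToHom, decHomLeft_decMap, decHomLeft_phiMap_app]
    simp [NtwMap]
    erw [eqToHom_refl, eqToHom_refl, Category.id_comp, Category.comp_id, Functor.whiskerRight_app]
    rfl

end Stmt11

/-- For every category `C` and every `n ≥ 0` there is an isomorphism of categories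
`Ñ^w_{n+1}(C) ≅ N_n(𝔻(C)) = ComposableArrows (𝔻(C)) n` (an isomorphism in `Cat`), and
these isomorphisms are natural in `C`.  This is the levelwise form of the isomorphism
`dec(Ñ^w(C))_• ≅ N_•(𝔻(C))`. -/
theorem stmt11 (n : ℕ) :
    ∃ e : ∀ C : Cat.{u, u}, Cat.of (Ntw n C) ≅ Cat.of (ComposableArrows (Dec C) n),
      ∀ (C D : Cat.{u, u}) (F : C ⟶ D),
        ((NtwMap n F.toFunctor).toCatHom ≫ (e D).hom :
            Cat.of (Ntw n C) ⟶ Cat.of (ComposableArrows (Dec D) n)) =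
          (e C).hom ≫
            ((Functor.whiskeringRight (Fin (n + 1)) (Dec C) (Dec D)).obj (decMap F.toFunctor)).toCatHom := by
  refine ⟨fun C => ⟨(Stmt11.phi n).toCatHom, (Stmt11.psi n).toCatHom,
    congrArg Functor.toCatHom (Stmt11.psi_phi n), congrArg Functor.toCatHom (Stmt11.phi_psi n)⟩,
    fun C D F => congrArg Functor.toCatHom (Stmt11.phi_natural n F.toFunctor)⟩
end
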